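/- arXiv:1707.01762 — 3 statements merged into one kernel-verified Lean document; each statement's English description precedes it below -/
import Mathlib

section
/- Let ν be an ergodic shift-invariant Borel probability measure on Ω and μ a shift-invariant Borel probability measure on Ω. If sup_{n≥1} H_{Λ_n}(μ | ν) < ∞, then μ = ν. -/
open MeasureTheory Filter
open scoped Classical

noncomputable section

namespace Paper

variable {A : Type*} [MetricSpace A] [CompactSpace A] [MeasurableSpace A] [BorelSpace A]

/-- The left shift `σ` on `Ω = Aᴺ`. -/
def shift (x : ℕ → A) : ℕ → A := fun n => x (n + 1)

/-- Prepend a symbol: `cons a x = (a, x₀, x₁, …)`. -/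
def cons (a : A) (x : ℕ → A) : ℕ → A := fun n =>
  match n with
  | 0 => a
  | n + 1 => x n

/-- The metric `d_Ω` on `Ω`. -/
def dOmega (x y : ℕ → A) : ℝ :=
  ∑' n : ℕ, (1 / 2 : ℝ) ^ (n + 1) * (dist (x n) (y n) / (1 + dist (x n) (y n)))

/-- `f` is `α`-Hölder with respect to `d_Ω`. -/
def IsHolder (α : ℝ) (f : (ℕ → A) → ℝ) : Prop :=
  ∃ C : ℝ, 0 ≤ C ∧ ∀ x y, |f x - f y| ≤ C * dOmega x y ^ α

/-- The Ruelle transfer operator with a priori measure `p`. -/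
def ruelle (p : Measure A) (f φ : (ℕ → A) → ℝ) : (ℕ → A) → ℝ :=
  fun x => ∫ a, Real.exp (f (cons a x)) * φ (cons a x) ∂p

/-- The normalized potential `f̄ = f + log h - log (h ∘ σ) - log λ`. -/
def fbar (f h : (ℕ → A) → ℝ) (lam : ℝ) : (ℕ → A) → ℝ :=
  fun x => f x + Real.log (h x) - Real.log (h (shift x)) - Real.log lam

/-- Projection on the first `n` coordinates. -/
def proj (n : ℕ) (x : ℕ → A) : Fin n → A := fun i => x i

/-- Relative entropy `H(μ|ν)` of two measures, with value `+∞` unless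
`μ ≪ ν` and the entropy integral is finite. -/
def relEnt {X : Type*} [MeasurableSpace X] (μ ν : Measure X) : EReal :=
  if μ ≪ ν ∧ Integrable (fun x => Real.log (μ.rnDeriv ν x).toReal) μ then
    ((∫ x, Real.log (μ.rnDeriv ν x).toReal ∂μ : ℝ) : EReal)
  else ⊤

/-- Relative entropy `H_{Λ_n}(μ|ν)` on the σ-algebra of the first `n` coordinates. -/
def relEntN (n : ℕ) (μ ν : Measure (ℕ → A)) : EReal :=
  relEnt (μ.map (proj n)) (ν.map (proj n))

/-- The entropy `H_{Λ_n}(μ) = -H_{Λ_n}(μ | pᴺ)` relative to the a priori measure `p`. -/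
def finEnt (p : Measure A) (μ : Measure (ℕ → A)) (n : ℕ) : EReal :=
  - relEnt (μ.map (proj n)) (Measure.pi fun _ : Fin n => p)

/-- The specific entropy `h^s(μ) = lim_n H_{Λ_n}(μ)/n` (defined as a `limsup`,
which coincides with the limit whenever the latter exists). -/
def specEnt (p : Measure A) (μ : Measure (ℕ → A)) : EReal :=
  Filter.atTop.limsup fun n : ℕ => ((n : ℝ)⁻¹ : EReal) * finEnt p μ n

/-- Birkhoff sum `S_n(f)`. -/
def birkhoff (n : ℕ) (f : (ℕ → A) → ℝ) (x : ℕ → A) : ℝ :=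
  ∑ i ∈ Finset.range n, f (shift^[i] x)

/-- The configuration `x_{Λ_n} y_{Λ_n^c}`. -/
def concatAt (n : ℕ) (x y : ℕ → A) : ℕ → A := fun i => if i < n then x i else y i

/-- Concatenation of a finite word with a configuration. -/
def wordCons (n : ℕ) (a : Fin n → A) (x : ℕ → A) : ℕ → A :=
  fun i => if h : i < n then a ⟨i, h⟩ else x (i - n)


section Aux

open scoped symmDiff ENNReal Topology
open Set

set_option linter.unusedSectionVars false
set_option maxHeartbeats 1000000

lemma tangent_global {t : ℝ} (ht : 0 ≤ t) : t - 1 ≤ t * Real.log t := by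
  rcases eq_or_lt_of_le ht with h | h
  · simp [← h]
  · have hlog := Real.log_le_sub_one_of_pos (inv_pos.2 h)
    rw [Real.log_inv] at hlog
    have := mul_le_mul_of_nonneg_left hlog (le_of_lt h)
    rw [mul_sub, mul_inv_cancel₀ (ne_of_gt h)] at this
    nlinarith

lemma tangent_at {t s : ℝ} (ht : 0 ≤ t) (hs : 0 < s) :
    t * Real.log s + (t - s) ≤ t * Real.log t := by
  rcases eq_or_lt_of_le ht with h | h
  · simp [← h]
    linarith
  · have hlog := Real.log_le_sub_one_of_pos (div_pos hs h)
    rw [Real.log_div (ne_of_gt hs) (ne_of_gt h)] at hlog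
    have h1 := mul_le_mul_of_nonneg_left hlog (le_of_lt h)
    have h2 : t * (s / t - 1) = s - t := by field_simp
    rw [mul_sub, h2] at h1
    nlinarith

theorem entropy_set_bound {X : Type*} [MeasurableSpace X] (P Q : Measure X)
    [IsProbabilityMeasure P] [IsProbabilityMeasure Q] (hPQ : P ≪ Q)
    (hint : Integrable (fun x => Real.log (P.rnDeriv Q x).toReal) P)
    {C : ℝ} (hC : ∫ x, Real.log (P.rnDeriv Q x).toReal ∂P ≤ C) (hCnn : 0 ≤ C)
    {F : Set X} (hF : MeasurableSet F) :
    (P F).toReal * Real.log ((P F).toReal / (Q F).toReal) ≤ C + 1 := by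
  set g : X → ℝ := fun x => (P.rnDeriv Q x).toReal with hgdef
  set L : X → ℝ := fun x => Real.log (g x) with hLdef
  have hgnn : ∀ x, 0 ≤ g x := fun x => ENNReal.toReal_nonneg
  have hgQ : Integrable g Q := Measure.integrable_toReal_rnDeriv
  have hGL : Integrable (fun x => g x * L x) Q := by
    have := (integrable_rnDeriv_smul_iff hPQ).2 hint
    simpa [smul_eq_mul] using this
  have hset : ∀ S : Set X, MeasurableSet S →
      ∫ x in S, g x * L x ∂Q = ∫ x in S, L x ∂P := by
    intro S hS
    have hwd := withDensityᵥ_rnDeriv_smul hPQ hint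
    have h1 := withDensityᵥ_apply (by simpa [smul_eq_mul] using hGL :
      Integrable (fun x => (P.rnDeriv Q x).toReal • Real.log (P.rnDeriv Q x).toReal) Q) hS
    have h2 := withDensityᵥ_apply hint hS
    rw [hwd] at h1
    rw [h2] at h1
    simpa [smul_eq_mul] using h1.symm
  set p : ℝ := (P F).toReal with hpdef
  set q : ℝ := (Q F).toReal with hqdef
  rcases eq_or_lt_of_le (show (0:ℝ) ≤ p from ENNReal.toReal_nonneg) with hp0 | hp0
  · rw [← hp0, zero_mul]; linarith
  have hPF : P F ≠ 0 := by
    intro h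
    rw [hpdef, h] at hp0
    simp at hp0
  have hQF : Q F ≠ 0 := fun h => hPF (hPQ h)
  have hq0 : 0 < q := ENNReal.toReal_pos hQF (measure_ne_top Q F)
  set s : ℝ := p / q with hsdef
  have hs0 : 0 < s := div_pos hp0 hq0
  have hgint : ∀ S : Set X, MeasurableSet S → ∫ x in S, g x ∂Q = (P S).toReal :=
    fun S _ => Measure.setIntegral_toReal_rnDeriv hPQ S
  have hsub : Integrable (fun x => g x - s) Q := by
    exact hgQ.sub (integrable_const s)
  have hmuls : Integrable (fun x => g x * Real.log s) Q := hgQ.mul_const (Real.log s)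
  have hlowF : p * Real.log s ≤ ∫ x in F, g x * L x ∂Q := by
    have hmono := setIntegral_mono_on (f := fun x => g x * Real.log s + (g x - s))
      (hmuls.add hsub).integrableOn
      hGL.integrableOn hF (fun x _ => tangent_at (hgnn x) hs0)
    have hcalc : ∫ x in F, (g x * Real.log s + (g x - s)) ∂Q = p * Real.log s := by
      rw [integral_add hmuls.integrableOn hsub.integrableOn,
        integral_sub hgQ.integrableOn (integrableOn_const (measure_ne_top Q F) enorm_ne_top),
        integral_mul_const, hgint F hF, setIntegral_const, measureReal_def, smul_eq_mul]
      have hqs : q * s = p := by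
        rw [hsdef]
        field_simp
      rw [← hpdef, ← hqdef]
      linarith [hqs]
    linarith [hmono, hcalc.symm.le, hcalc.le]
  have hlowFc : (-1 : ℝ) ≤ ∫ x in Fᶜ, g x * L x ∂Q := by
    have hsub1 : Integrable (fun x => g x - 1) Q := by
      exact hgQ.sub (integrable_const 1)
    have hmono := setIntegral_mono_on (f := fun x => g x - 1) hsub1.integrableOn
      hGL.integrableOn hF.compl (fun x _ => tangent_global (hgnn x))
    have hcalc : ∫ x in Fᶜ, (g x - 1) ∂Q = (P Fᶜ).toReal - (Q Fᶜ).toReal := by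
      rw [integral_sub hgQ.integrableOn (integrableOn_const (measure_ne_top Q Fᶜ) enorm_ne_top),
        hgint Fᶜ hF.compl, setIntegral_const, measureReal_def, smul_eq_mul, mul_one]
    have h1 : (Q Fᶜ).toReal ≤ 1 := by
      have := prob_le_one (μ := Q) (s := Fᶜ)
      calc (Q Fᶜ).toReal ≤ (1 : ℝ≥0∞).toReal := ENNReal.toReal_mono (by simp) this
        _ = 1 := by simp
    have h2 : 0 ≤ (P Fᶜ).toReal := ENNReal.toReal_nonneg
    linarith [hmono, hcalc.le, hcalc.symm.le]
  have hsplit : ∫ x, L x ∂P = ∫ x in F, L x ∂P + ∫ x in Fᶜ, L x ∂P :=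
    (integral_add_compl hF hint).symm
  have : p * Real.log s - 1 ≤ ∫ x, L x ∂P := by
    rw [hsplit, ← hset F hF, ← hset Fᶜ hF.compl]
    linarith
  linarith [hC]

lemma real_bound {C ε δ p q : ℝ} (hε : 0 < ε) (hCnn : 0 ≤ C)
    (hδ : δ = ε * Real.exp (-(C + 2) / ε))
    (hp1 : p ≤ 1) (hq : 0 < q) (hqδ : q ≤ δ)
    (hmain : p * Real.log (p / q) ≤ C + 1) : p ≤ ε := by
  by_contra hlt
  push_neg at hlt
  have hδ0 : 0 < δ := by
    rw [hδ]; positivity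
  have hp0 : 0 < p := lt_trans hε hlt
  have hεδ : ε / δ = Real.exp ((C + 2) / ε) := by
    rw [hδ, neg_div, Real.exp_neg, div_eq_iff (by positivity)]
    field_simp
  have h1 : ε / δ < p / q := by gcongr
  have h2 : (C + 2) / ε < Real.log (p / q) := by
    rw [← Real.log_exp ((C + 2) / ε), ← hεδ]
    exact Real.log_lt_log (by positivity) h1
  have h3 : 0 < (C + 2) / ε := by positivity
  have h4 : C + 2 < p * Real.log (p / q) := by
    calc C + 2 = ε * ((C + 2) / ε) := by field_simp
    _ < p * ((C + 2) / ε) := by nlinarith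
    _ ≤ p * Real.log (p / q) := by nlinarith
  linarith

theorem measure_small {X : Type*} [MeasurableSpace X] (P Q : Measure X)
    [IsProbabilityMeasure P] [IsProbabilityMeasure Q] (hPQ : P ≪ Q)
    (hint : Integrable (fun x => Real.log (P.rnDeriv Q x).toReal) P)
    {C : ℝ} (hC : ∫ x, Real.log (P.rnDeriv Q x).toReal ∂P ≤ C) (hCnn : 0 ≤ C)
    {ε : ℝ} (hε : 0 < ε)
    {F : Set X} (hF : MeasurableSet F)
    (hQF : Q F ≤ ENNReal.ofReal (ε * Real.exp (-(C + 2) / ε))) :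
    P F ≤ ENNReal.ofReal ε := by
  set δ : ℝ := ε * Real.exp (-(C + 2) / ε) with hδdef
  rcases eq_or_ne (Q F) 0 with h0 | h0
  · rw [hPQ h0]
    exact zero_le
  have hq0 : 0 < (Q F).toReal := ENNReal.toReal_pos h0 (measure_ne_top Q F)
  have hqδ : (Q F).toReal ≤ δ := by
    have := ENNReal.toReal_mono ENNReal.ofReal_ne_top hQF
    rwa [ENNReal.toReal_ofReal (by positivity)] at this
  have hp1 : (P F).toReal ≤ 1 := by
    have := prob_le_one (μ := P) (s := F)
    calc (P F).toReal ≤ (1 : ℝ≥0∞).toReal := ENNReal.toReal_mono (by simp) this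
      _ = 1 := by simp
  have hmain := entropy_set_bound P Q hPQ hint hC hCnn hF
  have hfin := real_bound hε hCnn hδdef hp1 hq0 hqδ hmain
  calc P F = ENNReal.ofReal (P F).toReal := (ENNReal.ofReal_toReal (measure_ne_top P F)).symm
    _ ≤ ENNReal.ofReal ε := ENNReal.ofReal_le_ofReal hfin

theorem eq_of_ac {X : Type*} [MeasurableSpace X] {T : X → X} {ν μ : Measure X}
    [IsProbabilityMeasure ν] [IsProbabilityMeasure μ]
    (hν : Ergodic T ν) (hμT : μ.map T = μ) (hac : μ ≪ ν) : μ = ν := by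
  have hT : Measurable T := hν.toMeasurePreserving.measurable
  set f : X → ℝ := fun x => (μ.rnDeriv ν x).toReal with hfdef
  have hf : Measurable f := (Measure.measurable_rnDeriv μ ν).ennreal_toReal
  have hfint : Integrable f ν := Measure.integrable_toReal_rnDeriv
  have key : ∀ c : ℝ, ∀ᵐ x ∂ν, (f (T x) < c ↔ f x < c) := by
    intro c
    set B : Set X := {x | f x < c} with hBdef
    have hB : MeasurableSet B := measurableSet_lt hf measurable_const
    set D1 : Set X := T ⁻¹' B \ B with hD1def
    set D2 : Set X := B \ T ⁻¹' B with hD2def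
    have hD1 : MeasurableSet D1 := (hT hB).diff hB
    have hD2 : MeasurableSet D2 := hB.diff (hT hB)
    have hνB : ν (T ⁻¹' B) = ν B := hν.toMeasurePreserving.measure_preimage hB.nullMeasurableSet
    have hμB : μ (T ⁻¹' B) = μ B := by
      conv_rhs => rw [← hμT]
      rw [Measure.map_apply hT hB]
    have hcancel : ∀ (ρ : Measure X) [IsProbabilityMeasure ρ], ρ (T ⁻¹' B) = ρ B →
        ρ D1 = ρ D2 := by
      intro ρ _ h
      have h1 : ρ (T ⁻¹' B ∩ B) + ρ D1 = ρ (T ⁻¹' B) := measure_inter_add_diff _ hB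
      have h2 : ρ (B ∩ T ⁻¹' B) + ρ D2 = ρ B := measure_inter_add_diff _ (hT hB)
      rw [Set.inter_comm] at h1
      rw [h, ← h2] at h1
      exact ((ENNReal.add_right_inj (measure_ne_top ρ _)).1 h1)
    have hνD : ν D1 = ν D2 := hcancel ν hνB
    have hμD : μ D1 = μ D2 := hcancel μ hμB
    have hi1 : ∫ x in D1, f x ∂ν = (μ D1).toReal := Measure.setIntegral_toReal_rnDeriv hac D1
    have hi2 : ∫ x in D2, f x ∂ν = (μ D2).toReal := Measure.setIntegral_toReal_rnDeriv hac D2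
    have hlow : (ν D1).toReal * c ≤ ∫ x in D1, f x ∂ν := by
      have := setIntegral_mono_on (integrableOn_const (measure_ne_top ν D1) enorm_ne_top)
        hfint.integrableOn hD1 (fun x hx => not_lt.1 hx.2)
      exact (by simpa [setIntegral_const, smul_eq_mul] using this : ν.real D1 * c ≤ _)
    have hup : ∫ x in D2, f x ∂ν ≤ (ν D2).toReal * c := by
      have := setIntegral_mono_on hfint.integrableOn
        (integrableOn_const (measure_ne_top ν D2) enorm_ne_top)
        hD2 (fun x hx => le_of_lt hx.1)
      exact (by simpa [setIntegral_const, smul_eq_mul] using this : _ ≤ ν.real D2 * c)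
    have heq2 : ∫ x in D2, f x ∂ν = (ν D2).toReal * c := by
      apply le_antisymm hup
      calc (ν D2).toReal * c = (ν D1).toReal * c := by rw [hνD]
        _ ≤ ∫ x in D1, f x ∂ν := hlow
        _ = (μ D2).toReal := by rw [hi1, hμD]
        _ = ∫ x in D2, f x ∂ν := hi2.symm
    have hzero : ∫ x in D2, (c - f x) ∂ν = 0 := by
      rw [integral_sub (show Integrable (fun _ => c) (ν.restrict D2) from
        integrableOn_const (measure_ne_top ν D2) enorm_ne_top) hfint.integrableOn]
      rw [setIntegral_const, heq2, measureReal_def]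
      ring_nf
    have hnn : 0 ≤ᵐ[ν.restrict D2] fun x => c - f x := by
      refine (ae_restrict_iff' hD2).2 (ae_of_all _ fun x hx => ?_)
      have h1 : f x < c := hx.1
      show (0:ℝ) ≤ c - f x
      linarith
    have hae0 : (fun x => c - f x) =ᵐ[ν.restrict D2] 0 := by
      refine (integral_eq_zero_iff_of_nonneg_ae hnn ?_).1 hzero
      exact (integrableOn_const (measure_ne_top ν D2) enorm_ne_top).sub hfint.integrableOn
    have hD2zero : ν D2 = 0 := by
      have h := (ae_restrict_iff' hD2).1 hae0
      rw [measure_eq_zero_iff_ae_notMem]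
      filter_upwards [h] with x hx hxD2
      have h1 : f x < c := hxD2.1
      have h2 : c - f x = (0:ℝ) := by simpa using hx hxD2
      linarith
    have hD1zero : ν D1 = 0 := by rw [hνD]; exact hD2zero
    have hU : ν (D1 ∪ D2) = 0 := measure_union_null hD1zero hD2zero
    rw [measure_eq_zero_iff_ae_notMem] at hU
    filter_upwards [hU] with x hx
    simp only [Set.mem_union, not_or] at hx
    constructor
    · intro h1
      by_contra h2
      exact hx.1 ⟨h1, h2⟩
    · intro h1
      by_contra h2
      exact hx.2 ⟨h1, h2⟩
  have hcomp : (fun x => f (T x)) =ᵐ[ν] f := by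
    have hall : ∀ᵐ x ∂ν, ∀ q : ℚ, (f (T x) < (q:ℝ) ↔ f x < (q:ℝ)) :=
      ae_all_iff.2 fun q => key q
    filter_upwards [hall] with x hx
    by_contra hne
    rcases lt_or_gt_of_ne hne with h | h
    · obtain ⟨q, hq1, hq2⟩ := exists_rat_btwn h
      exact absurd ((hx q).1 hq1) (not_lt.2 (le_of_lt hq2))
    · obtain ⟨q, hq1, hq2⟩ := exists_rat_btwn h
      exact absurd ((hx q).2 hq1) (not_lt.2 (le_of_lt hq2))
  have : Nonempty X := Measure.nonempty_of_neZero ν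
  obtain ⟨c, hc⟩ := hν.ae_eq_const_of_ae_eq_comp₀ hf.nullMeasurable hcomp
  have h1 : μ.rnDeriv ν =ᵐ[ν] fun _ => ENNReal.ofReal c := by
    filter_upwards [hc, Measure.rnDeriv_ne_top μ ν] with x hx htop
    have hx' : (μ.rnDeriv ν x).toReal = c := hx
    rw [← hx']
    exact (ENNReal.ofReal_toReal htop).symm
  have hμeq : μ = ENNReal.ofReal c • ν := by
    rw [← Measure.withDensity_rnDeriv_eq μ ν hac, withDensity_congr_ae h1, withDensity_const]
  have hc1 : ENNReal.ofReal c = 1 := by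
    have := congrArg (fun m : Measure X => m Set.univ) hμeq
    simpa [Measure.smul_apply, smul_eq_mul] using this.symm
  rw [hμeq, hc1, one_smul]

variable {A : Type*} [MetricSpace A] [CompactSpace A] [MeasurableSpace A] [BorelSpace A]

def 𝒢 (A : Type*) [MeasurableSpace A] (n : ℕ) : MeasurableSpace (ℕ → A) :=
  MeasurableSpace.comap (proj n) inferInstance

lemma measurable_proj (n : ℕ) : Measurable (proj (A := A) n) :=
  measurable_pi_lambda _ fun i => measurable_pi_apply _

lemma G_mono : Monotone (𝒢 A) := by
  intro n m h
  have hfac : proj (A := A) n =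
      (fun (y : Fin m → A) (i : Fin n) => y (Fin.castLE h i)) ∘ proj m := rfl
  rw [𝒢, hfac, ← MeasurableSpace.comap_comp]
  exact MeasurableSpace.comap_mono
    ((measurable_pi_lambda _ fun i => measurable_pi_apply _).comap_le)

lemma G_iSup : (inferInstance : MeasurableSpace (ℕ → A)) = ⨆ n, 𝒢 A n := by
  apply le_antisymm
  · show (⨆ i : ℕ, MeasurableSpace.comap (fun (x : ℕ → A) => x i) inferInstance) ≤ ⨆ n, 𝒢 A n
    refine iSup_le fun i => ?_
    have hfac : (fun (x : ℕ → A) => x i) =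
        (fun (y : Fin (i + 1) → A) => y ⟨i, Nat.lt_succ_self i⟩) ∘ proj (i + 1) := rfl
    rw [hfac, ← MeasurableSpace.comap_comp]
    refine le_trans (MeasurableSpace.comap_mono (measurable_pi_apply _).comap_le) ?_
    exact le_iSup (𝒢 A) (i + 1)
  · exact iSup_le fun n => (measurable_proj n).comap_le

lemma geo_tsum : (∑' i : ℕ, (2⁻¹ : ℝ≥0∞) ^ (i + 1)) = 1 := by
  have h : ∀ i : ℕ, (2⁻¹ : ℝ≥0∞) ^ (i + 1) = 2⁻¹ * 2⁻¹ ^ i := fun i => by ring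
  simp_rw [h]
  rw [ENNReal.tsum_mul_left, ENNReal.tsum_geometric, ENNReal.one_sub_inv_two, inv_inv]
  exact ENNReal.inv_mul_cancel two_ne_zero ENNReal.ofNat_ne_top

lemma geo_sum_le (ε : ℝ≥0∞) (M : ℕ) :
    ∑ i ∈ Finset.range M, ε * (2⁻¹ : ℝ≥0∞) ^ (i + 1) ≤ ε := by
  calc ∑ i ∈ Finset.range M, ε * (2⁻¹ : ℝ≥0∞) ^ (i + 1)
      ≤ ∑' i : ℕ, ε * (2⁻¹ : ℝ≥0∞) ^ (i + 1) := ENNReal.sum_le_tsum _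
    _ = ε * ∑' i : ℕ, (2⁻¹ : ℝ≥0∞) ^ (i + 1) := ENNReal.tsum_mul_left
    _ = ε := by rw [geo_tsum, mul_one]

theorem approx_lemma (ρ : Measure (ℕ → A)) [IsFiniteMeasure ρ] {E : Set (ℕ → A)}
    (hE : MeasurableSet E) (ε : ℝ≥0∞) (hε : 0 < ε) (hεtop : ε ≠ ⊤) :
    ∃ n F, MeasurableSet[𝒢 A n] F ∧ ρ (E ∆ F) < ε := by
  have hgen : (inferInstance : MeasurableSpace (ℕ → A)) =
      MeasurableSpace.generateFrom (⋃ n, {t | MeasurableSet[𝒢 A n] t}) := by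
    rw [MeasurableSpace.generateFrom_iUnion_measurableSet (𝒢 A)]
    exact G_iSup
  have hpi : IsPiSystem (⋃ n, {t : Set (ℕ → A) | MeasurableSet[𝒢 A n] t}) := by
    rintro s hs t ht -
    simp only [Set.mem_iUnion, Set.mem_setOf_eq] at *
    obtain ⟨n, hn⟩ := hs
    obtain ⟨m, hm⟩ := ht
    exact ⟨max n m, MeasurableSet.inter (G_mono (le_max_left n m) _ hn)
      (G_mono (le_max_right n m) _ hm)⟩
  revert ε
  refine MeasurableSpace.induction_on_inter
    (C := fun E _ => ∀ ε : ℝ≥0∞, 0 < ε → ε ≠ ⊤ → ∃ n F, MeasurableSet[𝒢 A n] F ∧ ρ (E ∆ F) < ε)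
    hgen hpi ?_ ?_ ?_ ?_ E hE
  · intro ε hε hεtop
    exact ⟨0, ∅, @MeasurableSet.empty _ (𝒢 A 0), by simpa [symmDiff_self] using hε⟩
  · intro t ht ε hε hεtop
    simp only [Set.mem_iUnion, Set.mem_setOf_eq] at ht
    obtain ⟨n, hn⟩ := ht
    exact ⟨n, t, hn, by simpa [symmDiff_self] using hε⟩
  · intro t htm iht ε hε hεtop
    obtain ⟨n, F, hF, hρ⟩ := iht ε hε hεtop
    exact ⟨n, Fᶜ, @MeasurableSet.compl _ _ (𝒢 A n) hF, by rwa [compl_symmDiff_compl]⟩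
  · intro f hdisj hfm ihf ε hε hεtop
    have hhalf : (0 : ℝ≥0∞) < ε / 2 := ENNReal.half_pos (ne_of_gt hε)
    have hhalftop : ε / 2 ≠ ⊤ := by
      simp [ENNReal.div_eq_top, hεtop]
    have htail : Tendsto (fun N => ρ ((⋃ i, f i) \ accumulate f N)) atTop
        (𝓝 (ρ (⋂ N, (⋃ i, f i) \ accumulate f N))) := by
      apply tendsto_measure_iInter_atTop
      · intro N
        have hacc : MeasurableSet (accumulate f N) := by
          rw [Set.accumulate_def]
          exact MeasurableSet.biUnion (Set.to_countable _) fun i _ => hfm i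
        exact ((MeasurableSet.iUnion hfm).diff hacc).nullMeasurableSet
      · intro a b hab
        exact diff_subset_diff_right (monotone_accumulate hab)
      · exact ⟨0, measure_ne_top ρ _⟩
    have hinter : (⋂ N, (⋃ i, f i) \ accumulate f N) = ∅ := by
      rw [← Set.diff_iUnion, iUnion_accumulate, Set.diff_self]
    rw [hinter, measure_empty] at htail
    obtain ⟨N, hN⟩ := (htail.eventually_lt_const hhalf).exists
    have hchoice : ∀ i : ℕ, ∃ n F, MeasurableSet[𝒢 A n] F ∧
        ρ (f i ∆ F) < ε / 2 * (2⁻¹ : ℝ≥0∞) ^ (i + 1) := by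
      intro i
      refine ihf i (ε / 2 * (2⁻¹ : ℝ≥0∞) ^ (i + 1)) ?_ ?_
      · exact ENNReal.mul_pos (ne_of_gt hhalf)
          (pow_ne_zero _ (ENNReal.inv_ne_zero.2 ENNReal.ofNat_ne_top))
      · exact ENNReal.mul_ne_top hhalftop (by
          exact ENNReal.pow_ne_top (by norm_num))
    choose n F hFmeas hFsmall using hchoice
    set M : ℕ := (Finset.range (N + 1)).sup n with hM
    set G : Set (ℕ → A) := ⋃ i ∈ Finset.range (N + 1), F i with hG
    have hGmeas : MeasurableSet[𝒢 A M] G := by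
      refine MeasurableSet.biUnion (Finset.range (N + 1)).countable_toSet fun i hi => ?_
      exact G_mono (Finset.le_sup hi) _ (hFmeas i)
    refine ⟨M, G, hGmeas, ?_⟩
    have hsub : (⋃ i, f i) ∆ G ⊆
        ((⋃ i, f i) \ accumulate f N) ∪ ⋃ i ∈ Finset.range (N + 1), (f i ∆ F i) := by
      intro x hx
      rw [Set.mem_symmDiff] at hx
      rcases hx with ⟨hxE, hxG⟩ | ⟨hxG, hxE⟩
      · by_cases hacc : x ∈ accumulate f N
        · obtain ⟨i, hiN, hxi⟩ := Set.mem_accumulate.1 hacc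
          have hir : i ∈ Finset.range (N + 1) := Finset.mem_range.2 (Nat.lt_succ_of_le hiN)
          refine Or.inr (Set.mem_biUnion hir ?_)
          rw [Set.mem_symmDiff]
          exact Or.inl ⟨hxi, fun hxF => hxG (Set.mem_biUnion hir hxF)⟩
        · exact Or.inl ⟨hxE, hacc⟩
      · have hxG2 : x ∈ ⋃ i ∈ Finset.range (N + 1), F i := hxG
        obtain ⟨i, hi, hxi⟩ : ∃ i < N + 1, x ∈ F i := by
          simpa using hxG2
        refine Or.inr (Set.mem_biUnion (Finset.mem_range.2 hi) ?_)
        rw [Set.mem_symmDiff]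
        exact Or.inr ⟨hxi, fun hxf => hxE (Set.mem_iUnion.2 ⟨i, hxf⟩)⟩
    have hbound : ρ ((⋃ i, f i) ∆ G) ≤
        ρ ((⋃ i, f i) \ accumulate f N) + ∑ i ∈ Finset.range (N + 1), ρ (f i ∆ F i) := by
      refine le_trans (measure_mono hsub) ?_
      refine le_trans (measure_union_le _ _) ?_
      gcongr
      exact measure_biUnion_finset_le _ _
    have hsum : ∑ i ∈ Finset.range (N + 1), ρ (f i ∆ F i) ≤ ε / 2 := by
      refine le_trans (Finset.sum_le_sum fun i _ => le_of_lt (hFsmall i)) (geo_sum_le _ _)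
    calc ρ ((⋃ i, f i) ∆ G) ≤ _ := hbound
      _ < ε / 2 + ε / 2 :=
        ENNReal.add_lt_add_of_lt_of_le (lt_of_le_of_lt hsum
          (lt_top_iff_ne_top.2 hhalftop)).ne hN hsum
      _ = ε := ENNReal.add_halves ε

end Aux

open scoped symmDiff ENNReal Topology

/-- If `ν` is an ergodic shift-invariant Borel probability measure, `μ`
is a shift-invariant Borel probability measure, and `sup_n H_{Λ_n}(μ|ν) < ∞`, then
`μ = ν`. -/
theorem statement13
    (ν μ : Measure (ℕ → A)) [IsProbabilityMeasure ν] [IsProbabilityMeasure μ]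
    (hν : Ergodic shift ν) (hμ : μ.map shift = μ)
    (C : ℝ) (hC : ∀ n : ℕ, relEntN n μ ν ≤ ((C : ℝ) : EReal)) :
    μ = ν := by
  classical
  have hshift : Measurable (shift (A := A)) := hν.toMeasurePreserving.measurable
  -- instances for mapped measures
  haveI : ∀ n : ℕ, IsProbabilityMeasure (μ.map (proj (A := A) n)) :=
    fun n => Measure.isProbabilityMeasure_map (measurable_proj n).aemeasurable
  haveI : ∀ n : ℕ, IsProbabilityMeasure (ν.map (proj (A := A) n)) :=
    fun n => Measure.isProbabilityMeasure_map (measurable_proj n).aemeasurable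
  set C₀ : ℝ := max C 0 with hC₀def
  have hC₀nn : (0:ℝ) ≤ C₀ := le_max_right _ _
  have hdata : ∀ n : ℕ, (μ.map (proj n)) ≪ (ν.map (proj n)) ∧
      Integrable (fun x => Real.log (((μ.map (proj n)).rnDeriv (ν.map (proj n))) x).toReal)
        (μ.map (proj n)) ∧
      ∫ x, Real.log (((μ.map (proj n)).rnDeriv (ν.map (proj n))) x).toReal
        ∂(μ.map (proj n)) ≤ C₀ := by
    intro n
    have h := hC n
    rw [relEntN, relEnt] at h
    split_ifs at h with hcond
    · refine ⟨hcond.1, hcond.2, ?_⟩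
      have h2 := EReal.coe_le_coe_iff.1 h
      exact le_trans h2 (le_max_left _ _)
    · exact absurd h (not_le.2 (EReal.coe_lt_top C))
  have habs : μ ≪ ν := by
    refine Measure.AbsolutelyContinuous.mk fun E hE hνE => ?_
    have key : ∀ ε : ℝ, 0 < ε → μ E ≤ 2 * ENNReal.ofReal ε := by
      intro ε hε
      set δ : ℝ := ε * Real.exp (-(C₀ + 2) / ε) with hδdef
      have hδ0 : 0 < δ := by positivity
      have hmin : 0 < min δ ε := lt_min hδ0 hε
      obtain ⟨n, F, hFmeas, hsmall⟩ := approx_lemma (μ + ν) hE (ENNReal.ofReal (min δ ε))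
        (by simpa using hmin) ENNReal.ofReal_ne_top
      obtain ⟨F', hF', rfl⟩ := hFmeas
      set Fs : Set (ℕ → A) := proj n ⁻¹' F' with hFs
      have hFmeas' : MeasurableSet Fs := (measurable_proj n) hF'
      have hmusmall : μ (symmDiff E Fs) ≤ ENNReal.ofReal (min δ ε) := by
        refine le_trans ?_ (le_of_lt hsmall)
        rw [Measure.add_apply]
        exact le_self_add
      have hnusmall : ν (symmDiff E Fs) ≤ ENNReal.ofReal (min δ ε) := by
        refine le_trans ?_ (le_of_lt hsmall)
        rw [Measure.add_apply]
        exact le_add_self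
      have hνFs : ν Fs ≤ ENNReal.ofReal δ := by
        have hsub : Fs ⊆ (Fs \ E) ∪ E := by
          intro x hx
          by_cases hxE : x ∈ E
          · exact Or.inr hxE
          · exact Or.inl ⟨hx, hxE⟩
        have h1 : ν Fs ≤ ν (Fs \ E) + ν E := le_trans (measure_mono hsub) (measure_union_le _ _)
        rw [hνE, add_zero] at h1
        have h2 : Fs \ E ⊆ symmDiff E Fs := by
          intro x hx
          rw [Set.mem_symmDiff]
          exact Or.inr ⟨hx.1, hx.2⟩
        refine le_trans h1 (le_trans (measure_mono h2) (le_trans hnusmall ?_))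
        exact ENNReal.ofReal_le_ofReal (min_le_left _ _)
      have hνF' : (ν.map (proj n)) F' ≤ ENNReal.ofReal δ := by
        rwa [Measure.map_apply (measurable_proj n) hF']
      obtain ⟨hPQ, hint, hCb⟩ := hdata n
      have hμF' : (μ.map (proj n)) F' ≤ ENNReal.ofReal ε :=
        measure_small _ _ hPQ hint hCb hC₀nn hε hF' hνF'
      have hμFs : μ Fs ≤ ENNReal.ofReal ε := by
        have h4 := hμF'
        rwa [Measure.map_apply (measurable_proj n) hF'] at h4
      have hEsub : E ⊆ Fs ∪ (E \ Fs) := by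
        intro x hx
        by_cases hxF : x ∈ Fs
        · exact Or.inl hxF
        · exact Or.inr ⟨hx, hxF⟩
      have h3 : E \ Fs ⊆ symmDiff E Fs := by
        intro x hx
        rw [Set.mem_symmDiff]
        exact Or.inl ⟨hx.1, hx.2⟩
      calc μ E ≤ μ Fs + μ (E \ Fs) := le_trans (measure_mono hEsub) (measure_union_le _ _)
        _ ≤ ENNReal.ofReal ε + ENNReal.ofReal ε := by
            refine add_le_add hμFs ?_
            refine le_trans (measure_mono h3) (le_trans hmusmall ?_)
            exact ENNReal.ofReal_le_ofReal (min_le_right _ _)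
        _ = 2 * ENNReal.ofReal ε := (two_mul _).symm
    have hEzero : μ E ≤ 0 := by
      refine ENNReal.le_of_forall_pos_le_add fun r hr _ => ?_
      have h := key ((r : ℝ) / 2) (by positivity)
      calc μ E ≤ 2 * ENNReal.ofReal ((r : ℝ) / 2) := h
        _ = ENNReal.ofReal (2 * ((r : ℝ) / 2)) := by
            rw [ENNReal.ofReal_mul (by norm_num : (0:ℝ) ≤ 2)]
            congr 1
            norm_num
        _ = (r : ℝ≥0∞) := by
            rw [show (2:ℝ) * ((r:ℝ)/2) = (r:ℝ) by ring, ENNReal.ofReal_coe_nnreal]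
        _ = 0 + (r : ℝ≥0∞) := (zero_add _).symm
    exact le_antisymm hEzero zero_le
  exact eq_of_ac hν hμ habs

end Paper
end
end

section
/- Let μ, ν be shift-invariant Borel probability measures on Ω such that H_{Λ_n}(μ|ν) < ∞ for all n and lim_{n→∞} H_{Λ_n}(μ|ν)/n = 0. Then for every δ > 0 and every n_1 ≥ 1 there exists n_2 > n_1 such that H_{Λ_{n_2}}(μ|ν) − H_{Λ_{n_2} ∖ Λ_{n_1}}(μ|ν) ≤ δ, where Λ_{n_2} ∖ Λ_{n_1} = {n_1+1, …, n_2}. -/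
open MeasureTheory Filter
open scoped Classical

noncomputable section

namespace Paper

variable {A : Type*} [MetricSpace A] [CompactSpace A] [MeasurableSpace A] [BorelSpace A]

/-- Projection on the coordinates in a finite set `Λ ⊂ ℕ`. -/
def projSet (Λ : Finset ℕ) (x : ℕ → A) : Λ → A := fun i => x i

/-- Relative entropy `H_Λ(μ|ν)` on the σ-algebra `F_Λ` generated by the coordinates in
the finite set `Λ`. -/
def relEntOn (Λ : Finset ℕ) (μ ν : Measure (ℕ → A)) : EReal :=
  relEnt (μ.map (projSet Λ)) (ν.map (projSet Λ))


section AuxLemmas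

variable {X Y : Type*} [MeasurableSpace X] [MeasurableSpace Y]

lemma relEnt_ne_bot (μ ν : Measure X) : relEnt μ ν ≠ ⊥ := by
  unfold relEnt; split_ifs <;> simp

lemma relEnt_nonneg (μ ν : Measure X) [IsProbabilityMeasure μ] [IsProbabilityMeasure ν] :
    0 ≤ relEnt μ ν := by
  unfold relEnt
  split_ifs with h
  · obtain ⟨hac, hint⟩ := h
    have hpos : ∀ᵐ x ∂μ, 0 < μ.rnDeriv ν x := Measure.rnDeriv_pos hac
    have hlt : ∀ᵐ x ∂μ, μ.rnDeriv ν x < ⊤ :=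
      (Measure.rnDeriv_lt_top μ ν).filter_mono hac.ae_le
    set g : X → ℝ := fun x => ((μ.rnDeriv ν x)⁻¹).toReal with hg
    have hmeas : Measurable fun x => (μ.rnDeriv ν x)⁻¹ := (Measure.measurable_rnDeriv μ ν).inv
    have hlin : ∫⁻ x, (μ.rnDeriv ν x)⁻¹ ∂μ ≤ 1 := by
      rw [← lintegral_rnDeriv_mul hac hmeas.aemeasurable]
      calc ∫⁻ x, μ.rnDeriv ν x * (μ.rnDeriv ν x)⁻¹ ∂ν ≤ ∫⁻ _, 1 ∂ν :=
            lintegral_mono fun x => ENNReal.mul_inv_le_one _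
        _ = 1 := by simp
    have hgint : Integrable g μ :=
      integrable_toReal_of_lintegral_ne_top hmeas.aemeasurable
        (ne_top_of_le_ne_top ENNReal.one_ne_top hlin)
    have hgle : ∫ x, g x ∂μ ≤ 1 := by
      rw [hg, integral_toReal hmeas.aemeasurable
        (hpos.mono fun x hx => by simp [ENNReal.inv_lt_top, hx])]
      simpa using ENNReal.toReal_mono ENNReal.one_ne_top hlin
    have hptw : ∀ᵐ x ∂μ, -(Real.log (μ.rnDeriv ν x).toReal) ≤ g x - 1 := by
      filter_upwards [hpos, hlt] with x hx hx'
      have ht : 0 < (μ.rnDeriv ν x).toReal := ENNReal.toReal_pos hx.ne' hx'.ne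
      have hlog := Real.log_le_sub_one_of_pos (inv_pos.2 ht)
      rw [Real.log_inv] at hlog
      have hgx : g x = ((μ.rnDeriv ν x).toReal)⁻¹ := by rw [hg]; simp [ENNReal.toReal_inv]
      rw [hgx]; linarith
    have h1 : ∫ x, -(Real.log (μ.rnDeriv ν x).toReal) ∂μ ≤ ∫ x, (g x - 1) ∂μ :=
      integral_mono_ae hint.neg (hgint.sub (integrable_const 1)) hptw
    rw [integral_neg] at h1
    have h2 : ∫ x, (g x - 1) ∂μ = (∫ x, g x ∂μ) - 1 := by
      rw [integral_sub hgint (integrable_const 1)]; simp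
    have hmain : 0 ≤ ∫ x, Real.log (μ.rnDeriv ν x).toReal ∂μ := by
      rw [h2] at h1; linarith
    exact_mod_cast hmain
  · exact le_top

lemma relEnt_map_equiv (μ ν : Measure X) [IsProbabilityMeasure μ] [IsProbabilityMeasure ν]
    (e : X ≃ᵐ Y) : relEnt (μ.map e) (ν.map e) = relEnt μ ν := by
  have hμe : IsProbabilityMeasure (μ.map e) := Measure.isProbabilityMeasure_map e.measurable.aemeasurable
  have hνe : IsProbabilityMeasure (ν.map e) := Measure.isProbabilityMeasure_map e.measurable.aemeasurable
  have hacs : μ.map ⇑e ≪ ν.map ⇑e ↔ μ ≪ ν := by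
    constructor
    · intro h
      have h2 := h.map e.symm.measurable
      rwa [Measure.map_map e.symm.measurable e.measurable,
        Measure.map_map e.symm.measurable e.measurable,
        MeasurableEquiv.symm_comp_self, Measure.map_id, Measure.map_id] at h2
    · exact fun h => h.map e.measurable
  by_cases hac : μ ≪ ν
  · have hac' := hacs.mpr hac
    have hrn : (fun x => ((μ.map ⇑e).rnDeriv (ν.map ⇑e)) (e x)) =ᵐ[ν] μ.rnDeriv ν :=
      e.measurableEmbedding.rnDeriv_map μ ν
    have hll : (fun x => Real.log (((μ.map ⇑e).rnDeriv (ν.map ⇑e)) (e x)).toReal)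
        =ᵐ[μ] fun x => Real.log ((μ.rnDeriv ν x).toReal) :=
      (hrn.filter_mono hac.ae_le).mono fun x hx => congrArg (fun t : ENNReal => Real.log t.toReal) hx
    have hmeasY : AEStronglyMeasurable
        (fun y => Real.log (((μ.map ⇑e).rnDeriv (ν.map ⇑e)) y).toReal) (μ.map ⇑e) :=
      ((Measure.measurable_rnDeriv _ _).ennreal_toReal.log).aestronglyMeasurable
    have hint_iff : Integrable (fun y => Real.log (((μ.map ⇑e).rnDeriv (ν.map ⇑e)) y).toReal)
        (μ.map ⇑e) ↔ Integrable (fun x => Real.log ((μ.rnDeriv ν x).toReal)) μ := by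
      rw [e.measurableEmbedding.integrable_map_iff]
      exact integrable_congr hll
    by_cases hI : Integrable (fun x => Real.log ((μ.rnDeriv ν x).toReal)) μ
    · rw [relEnt, relEnt, if_pos ⟨hac', hint_iff.mpr hI⟩, if_pos ⟨hac, hI⟩]
      refine congrArg (fun r : ℝ => (r : EReal)) ?_
      rw [integral_map e.measurable.aemeasurable hmeasY]
      exact integral_congr_ae hll
    · rw [relEnt, relEnt, if_neg (fun h => hI (hint_iff.mp h.2)), if_neg (fun h => hI h.2)]
  · rw [relEnt, relEnt, if_neg (fun h => hac (hacs.mp h.1)), if_neg (fun h => hac h.1)]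

end AuxLemmas

lemma measurable_shift : Measurable (shift (A := A)) :=
  measurable_pi_lambda _ fun n => measurable_pi_apply _

lemma measurable_projSet (Λ : Finset ℕ) : Measurable (projSet (A := A) Λ) :=
  measurable_pi_lambda _ fun i => measurable_pi_apply _

lemma shift_iterate_apply (k : ℕ) (x : ℕ → A) (n : ℕ) : shift^[k] x n = x (n + k) := by
  induction k generalizing n with
  | zero => simp
  | succ k ih =>
    rw [Function.iterate_succ_apply']
    show shift^[k] x (n + 1) = x (n + (k + 1))
    rw [ih]
    congr 1
    omega

lemma map_shift_iterate (μ : Measure (ℕ → A)) (hμ : μ.map shift = μ) (k : ℕ) :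
    μ.map (shift^[k]) = μ := by
  induction k with
  | zero => simp [Measure.map_id]
  | succ k ih =>
    rw [Function.iterate_succ,
      ← Measure.map_map (measurable_shift.iterate k) measurable_shift, hμ, ih]

lemma relEntOn_Ico_eq (μ ν : Measure (ℕ → A)) [IsProbabilityMeasure μ] [IsProbabilityMeasure ν]
    (hμ : μ.map shift = μ) (hν : ν.map shift = ν) (k m : ℕ) :
    relEntOn (Finset.Ico k (k + m)) μ ν = relEntOn (Finset.range m) μ ν := by
  have mem1 : ∀ i : {x // x ∈ Finset.range m}, ((i : ℕ) + k) ∈ Finset.Ico k (k + m) := by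
    rintro ⟨i, hi⟩
    simp only [Finset.mem_range] at hi
    simp only [Finset.mem_Ico]
    omega
  have mem2 : ∀ j : {x // x ∈ Finset.Ico k (k + m)}, ((j : ℕ) - k) ∈ Finset.range m := by
    rintro ⟨j, hj⟩
    simp only [Finset.mem_Ico] at hj
    simp only [Finset.mem_range]
    omega
  let E : ({x // x ∈ Finset.range m} → A) ≃ᵐ ({x // x ∈ Finset.Ico k (k + m)} → A) :=
    { toEquiv :=
      { toFun := fun f j => f ⟨(j : ℕ) - k, mem2 j⟩
        invFun := fun g i => g ⟨(i : ℕ) + k, mem1 i⟩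
        left_inv := fun f => funext fun i => congrArg f (Subtype.ext (Nat.add_sub_cancel _ _))
        right_inv := fun g => funext fun j =>
          congrArg g (Subtype.ext (Nat.sub_add_cancel (Finset.mem_Ico.mp j.2).1)) }
      measurable_toFun := measurable_pi_lambda _ fun j => measurable_pi_apply _
      measurable_invFun := measurable_pi_lambda _ fun i => measurable_pi_apply _ }
  have hcomp : projSet (A := A) (Finset.Ico k (k + m)) =
      ⇑E ∘ (projSet (Finset.range m) ∘ shift^[k]) := by
    funext x j
    have hj := Finset.mem_Ico.mp j.2
    show x (j : ℕ) = shift^[k] x ((j : ℕ) - k)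
    rw [shift_iterate_apply]
    congr 1
    omega
  have hmap : ∀ (κ : Measure (ℕ → A)), κ.map shift = κ →
      κ.map (projSet (Finset.Ico k (k + m))) = (κ.map (projSet (Finset.range m))).map E := by
    intro κ hκ
    rw [hcomp,
      ← Measure.map_map E.measurable ((measurable_projSet _).comp (measurable_shift.iterate k)),
      ← Measure.map_map (measurable_projSet _) (measurable_shift.iterate k),
      map_shift_iterate κ hκ k]
  haveI h1 : IsProbabilityMeasure (μ.map (projSet (Finset.range m))) :=
    Measure.isProbabilityMeasure_map (measurable_projSet _).aemeasurable
  haveI h2 : IsProbabilityMeasure (ν.map (projSet (Finset.range m))) :=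
    Measure.isProbabilityMeasure_map (measurable_projSet _).aemeasurable
  rw [relEntOn, relEntOn, hmap μ hμ, hmap ν hν, relEnt_map_equiv]

/-- Let `μ, ν` be shift-invariant Borel probability measures with
`H_{Λ_n}(μ|ν) < ∞` for all `n` and `lim_n H_{Λ_n}(μ|ν)/n = 0`. Then for every `δ > 0`
and every `n₁ ≥ 1` there is `n₂ > n₁` with
`H_{Λ_{n₂}}(μ|ν) - H_{Λ_{n₂}∖Λ_{n₁}}(μ|ν) ≤ δ`. -/
theorem statement14
    (μ ν : Measure (ℕ → A)) [IsProbabilityMeasure μ] [IsProbabilityMeasure ν]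
    (hμ : μ.map shift = μ) (hν : ν.map shift = ν)
    (hfin : ∀ n : ℕ, relEntOn (Finset.range n) μ ν ≠ ⊤)
    (hlim : Tendsto (fun n : ℕ => ((n : ℝ)⁻¹ : EReal) * relEntOn (Finset.range n) μ ν)
      atTop (nhds 0))
    (δ : ℝ) (hδ : 0 < δ) (n₁ : ℕ) (hn₁ : 1 ≤ n₁) :
    ∃ n₂ : ℕ, n₁ < n₂ ∧
      relEntOn (Finset.range n₂) μ ν
        ≤ relEntOn (Finset.Ico n₁ n₂) μ ν + ((δ : ℝ) : EReal) := by
  by_contra hcon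
  push_neg at hcon
  set r : ℕ → ℝ := fun n => (relEntOn (Finset.range n) μ ν).toReal with hrdef
  have hr : ∀ n, relEntOn (Finset.range n) μ ν = ((r n : ℝ) : EReal) := fun n =>
    (EReal.coe_toReal (hfin n) (relEnt_ne_bot _ _)).symm
  have hpos0 : ∀ n, 0 ≤ r n := by
    intro n
    haveI : IsProbabilityMeasure (μ.map (projSet (Finset.range n))) :=
      Measure.isProbabilityMeasure_map (measurable_projSet _).aemeasurable
    haveI : IsProbabilityMeasure (ν.map (projSet (Finset.range n))) :=
      Measure.isProbabilityMeasure_map (measurable_projSet _).aemeasurable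
    have h0 : (0 : EReal) ≤ relEntOn (Finset.range n) μ ν := relEnt_nonneg _ _
    rw [hr n] at h0
    exact_mod_cast h0
  have hstep : ∀ m, 1 ≤ m → r m + δ < r (n₁ + m) := by
    intro m hm
    have h := hcon (n₁ + m) (by omega)
    rw [relEntOn_Ico_eq μ ν hμ hν n₁ m, hr m, hr (n₁ + m)] at h
    have h2 : ((r m + δ : ℝ) : EReal) < ((r (n₁ + m) : ℝ) : EReal) := by
      rw [EReal.coe_add]; exact h
    exact_mod_cast h2
  have hkey : ∀ k : ℕ, (k : ℝ) * δ ≤ r ((k + 1) * n₁) := by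
    intro k
    induction k with
    | zero => simpa using hpos0 n₁
    | succ k ih =>
      have h := hstep ((k + 1) * n₁) (by nlinarith [hn₁])
      have harg : n₁ + (k + 1) * n₁ = (k + 1 + 1) * n₁ := by ring
      rw [harg] at h
      push_cast
      push_cast at ih
      nlinarith
  have hlimr : Tendsto (fun n : ℕ => (n : ℝ)⁻¹ * r n) atTop (nhds 0) := by
    have heq : (fun n : ℕ => (((n : ℝ) : EReal))⁻¹ * relEntOn (Finset.range n) μ ν)
        = fun n : ℕ => (((n : ℝ)⁻¹ * r n : ℝ) : EReal) := by
      funext n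
      rw [hr n, ← EReal.coe_inv, ← EReal.coe_mul]
    rw [heq] at hlim
    rw [show ((0 : EReal) = ((0 : ℝ) : EReal)) from rfl] at hlim
    exact EReal.tendsto_coe.mp hlim
  have hmono : StrictMono (fun j : ℕ => (j + 1) * n₁) := by
    intro a b hab
    have hab1 : a + 1 < b + 1 := by omega
    exact (Nat.mul_lt_mul_right (show 0 < n₁ from hn₁)).mpr hab1
  have hsub : Tendsto (fun j : ℕ => ((((j + 1) * n₁ : ℕ) : ℝ))⁻¹ * r ((j + 1) * n₁))
      atTop (nhds 0) := hlimr.comp hmono.tendsto_atTop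
  have hev := hsub.eventually (gt_mem_nhds (show (0 : ℝ) < δ / (2 * n₁) by positivity))
  obtain ⟨j, hj1, hj2⟩ := ((eventually_ge_atTop 1).and hev).exists
  have hn₁R : (0 : ℝ) < (n₁ : ℝ) := by exact_mod_cast hn₁
  have hjR : (1 : ℝ) ≤ (j : ℝ) := by exact_mod_cast hj1
  have hcast : (((j + 1) * n₁ : ℕ) : ℝ) = ((j : ℝ) + 1) * (n₁ : ℝ) := by push_cast; ring
  have hge : δ / (2 * n₁) ≤ ((((j + 1) * n₁ : ℕ) : ℝ))⁻¹ * r ((j + 1) * n₁) := by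
    have hstep2 : δ / (2 * n₁) ≤ (((j : ℝ) + 1) * (n₁ : ℝ))⁻¹ * ((j : ℝ) * δ) := by
      rw [inv_mul_eq_div, div_le_div_iff₀ (by positivity) (by positivity)]
      nlinarith [mul_nonneg (mul_nonneg hδ.le hn₁R.le) (sub_nonneg.mpr hjR)]
    refine le_trans hstep2 ?_
    rw [hcast]
    exact mul_le_mul_of_nonneg_left (hkey j) (by positivity)
  exact absurd hj2 (not_lt.mpr hge)


end Paper
end
end

section
/- For every ε > 0 there exists δ > 0 with the following property: for any probability measures μ, ν on a measurable space, any sub-σ-algebras G ⊆ F with μ ≪ ν on F, if the relative entropies satisfy H_F(μ|ν) − H_G(μ|ν) < δ (both finite), then ∫ | dμ|_F/dν|_F − dμ|_G/dν|_G | dν < ε. -/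
open MeasureTheory
open scoped Classical

noncomputable section

lemma key_pointwise {x y : ℝ} (hx : 0 ≤ x) (hy : 0 ≤ y) (hxy : y = 0 → x = 0) :
    (Real.sqrt x - Real.sqrt y) ^ 2 ≤ x * Real.log x - x * Real.log y - x + y := by
  rcases eq_or_lt_of_le hy with hy0 | hy0
  · have hx0 : x = 0 := hxy hy0.symm
    simp [hx0, ← hy0]
  rcases eq_or_lt_of_le hx with hx0 | hx0
  · simp [← hx0, Real.sq_sqrt hy]
  · set t := Real.sqrt (y / x) with ht_def
    have htpos : 0 < t := Real.sqrt_pos.mpr (div_pos hy0 hx0)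
    have hlog := Real.log_le_sub_one_of_pos htpos
    have h1 : Real.log t = (Real.log y - Real.log x) / 2 := by
      rw [ht_def, Real.log_sqrt (by positivity), Real.log_div (ne_of_gt hy0) (ne_of_gt hx0)]
    have h3 : Real.sqrt x ^ 2 = x := Real.sq_sqrt hx
    have h4 : Real.sqrt y ^ 2 = y := Real.sq_sqrt hy
    have h2 : t * Real.sqrt x = Real.sqrt y := by
      rw [ht_def, ← Real.sqrt_mul (by positivity)]
      congr 1
      field_simp
    have h2' : t * x = Real.sqrt x * Real.sqrt y := by
      calc t * x = (t * Real.sqrt x) * Real.sqrt x := by rw [mul_assoc, ← sq, h3]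
      _ = Real.sqrt x * Real.sqrt y := by rw [h2]; ring
    nlinarith [mul_le_mul_of_nonneg_left hlog (le_of_lt hx0), h1, h2', h3, h4,
      Real.sqrt_nonneg x, Real.sqrt_nonneg y]

/-- Relative entropy `H(μ|ν)` of two measures, with value `+∞` unless `μ ≪ ν` and the
entropy integral is finite. -/
def relEnt {X : Type*} [MeasurableSpace X] (μ ν : Measure X) : EReal :=
  if μ ≪ ν ∧ Integrable (fun x => Real.log (μ.rnDeriv ν x).toReal) μ then
    ((∫ x, Real.log (μ.rnDeriv ν x).toReal ∂μ : ℝ) : EReal)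
  else ⊤

/-- For every `ε > 0` there is `δ > 0` so that for any probability
measures `μ, ν` on a measurable space and sub-σ-algebras `G ⊆ F` with `μ ≪ ν` on `F`, if
the relative entropies `H_F(μ|ν), H_G(μ|ν)` are finite with `H_F(μ|ν) - H_G(μ|ν) < δ`,
then `∫ |dμ|_F/dν|_F - dμ|_G/dν|_G| dν < ε`. -/
theorem statement16 :
    ∀ ε : ℝ, 0 < ε → ∃ δ : ℝ, 0 < δ ∧
      ∀ (X : Type) (m0 mF mG : MeasurableSpace X) (hGF : mG ≤ mF) (hF : mF ≤ m0)
        (μ ν : @Measure X m0),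
        @IsProbabilityMeasure X m0 μ → @IsProbabilityMeasure X m0 ν →
        μ.trim hF ≪ ν.trim hF →
        @relEnt X mF (μ.trim hF) (ν.trim hF) ≠ ⊤ →
        @relEnt X mG (μ.trim (hGF.trans hF)) (ν.trim (hGF.trans hF)) ≠ ⊤ →
        @relEnt X mF (μ.trim hF) (ν.trim hF)
          < @relEnt X mG (μ.trim (hGF.trans hF)) (ν.trim (hGF.trans hF)) + ((δ : ℝ) : EReal) →
        ∫ x, |((μ.trim hF).rnDeriv (ν.trim hF) x).toReal
            - ((μ.trim (hGF.trans hF)).rnDeriv (ν.trim (hGF.trans hF)) x).toReal| ∂ν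
          < ε := by
  intro ε hε
  refine ⟨ε ^ 2 / 4, by positivity, ?_⟩
  intro X m0 mF mG hGF hF μ ν hμprob hνprob hac hFfin hGfin hlt
  set δ : ℝ := ε ^ 2 / 4 with hδ_def
  have hGF' : mG ≤ m0 := hGF.trans hF
  set μF : @Measure X mF := μ.trim hF with hμF
  set νF : @Measure X mF := ν.trim hF with hνF
  set μG : @Measure X mG := μ.trim hGF' with hμG
  set νG : @Measure X mG := ν.trim hGF' with hνG
  -- probability instances on trimmed measures
  haveI hμFprob : IsProbabilityMeasure μF :=
    ⟨by rw [hμF, trim_measurableSet_eq hF (@MeasurableSet.univ X mF)]; exact measure_univ⟩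
  haveI hνFprob : IsProbabilityMeasure νF :=
    ⟨by rw [hνF, trim_measurableSet_eq hF (@MeasurableSet.univ X mF)]; exact measure_univ⟩
  haveI hμGprob : IsProbabilityMeasure μG :=
    ⟨by rw [hμG, trim_measurableSet_eq hGF' (@MeasurableSet.univ X mG)]; exact measure_univ⟩
  haveI hνGprob : IsProbabilityMeasure νG :=
    ⟨by rw [hνG, trim_measurableSet_eq hGF' (@MeasurableSet.univ X mG)]; exact measure_univ⟩
  -- G-level absolute continuity
  have hacG : μG ≪ νG := by
    refine Measure.AbsolutelyContinuous.mk (fun s hs hνs => ?_)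
    have hsF : MeasurableSet[mF] s := hGF s hs
    have hν0 : ν s = 0 := by rwa [hνG, trim_measurableSet_eq hGF' hs] at hνs
    have hνF0 : νF s = 0 := by rw [hνF, trim_measurableSet_eq hF hsF]; exact hν0
    have := hac hνF0
    rw [hμF, trim_measurableSet_eq hF hsF] at this
    rw [hμG, trim_measurableSet_eq hGF' hs]
    exact this
  -- relEnt finiteness unfolding
  have hcF : μF ≪ νF ∧ Integrable (fun x => Real.log (μF.rnDeriv νF x).toReal) μF := by
    by_contra h
    simp only [relEnt, if_neg h] at hFfin
    exact hFfin rfl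
  have hcG : μG ≪ νG ∧ Integrable (fun x => Real.log (μG.rnDeriv νG x).toReal) μG := by
    by_contra h
    simp only [relEnt, if_neg h] at hGfin
    exact hGfin rfl
  set f : X → ℝ := fun x => (μF.rnDeriv νF x).toReal with hf_def
  set g : X → ℝ := fun x => (μG.rnDeriv νG x).toReal with hg_def
  have hf_measF : Measurable[mF] f := (Measure.measurable_rnDeriv μF νF).ennreal_toReal
  have hg_measG : Measurable[mG] g := (Measure.measurable_rnDeriv μG νG).ennreal_toReal
  have hg_measF : Measurable[mF] g := hg_measG.mono hGF le_rfl
  have hf_meas : Measurable[m0] f := hf_measF.mono hF le_rfl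
  have hg_meas : Measurable[m0] g := hg_measG.mono hGF' le_rfl
  have hf_nonneg : ∀ x, 0 ≤ f x := fun x => ENNReal.toReal_nonneg
  have hg_nonneg : ∀ x, 0 ≤ g x := fun x => ENNReal.toReal_nonneg
  -- reduce the EReal hypothesis to reals
  set HF : ℝ := ∫ x, Real.log (μF.rnDeriv νF x).toReal ∂μF with hHF
  set HG : ℝ := ∫ x, Real.log (μG.rnDeriv νG x).toReal ∂μG with hHG
  have hltR : HF < HG + δ := by
    simp only [relEnt, if_pos hcF, if_pos hcG] at hlt
    rw [← EReal.coe_add] at hlt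
    exact_mod_cast hlt
  -- μG is the trim of μF
  have hμG_trim : μG = μF.trim hGF := by rw [hμF, hμG, MeasureTheory.trim_trim]
  have hνG_trim : νG = νF.trim hGF := by rw [hνF, hνG, MeasureTheory.trim_trim]
  -- integrability of the three products w.r.t. ν
  have int_flogf : Integrable (fun x => f x * Real.log (f x)) ν := by
    have h1 : Integrable (fun x => f x • Real.log (f x)) νF :=
      (integrable_rnDeriv_smul_iff hcF.1).mpr hcF.2
    simp only [smul_eq_mul] at h1
    exact integrable_of_integrable_trim hF h1
  have int_glogg : Integrable (fun x => g x * Real.log (g x)) ν := by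
    have h1 : Integrable (fun x => g x • Real.log (g x)) νG :=
      (integrable_rnDeriv_smul_iff hcG.1).mpr hcG.2
    simp only [smul_eq_mul] at h1
    exact integrable_of_integrable_trim hGF' h1
  have int_logg_muF : Integrable (fun x => Real.log (g x)) μF :=
    integrable_of_integrable_trim hGF (by rw [← hμG_trim]; exact hcG.2)
  have int_flogg : Integrable (fun x => f x * Real.log (g x)) ν := by
    have h1 : Integrable (fun x => f x • Real.log (g x)) νF :=
      (integrable_rnDeriv_smul_iff hcF.1).mpr int_logg_muF
    simp only [smul_eq_mul] at h1
    exact integrable_of_integrable_trim hF h1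
  have int_f : Integrable f ν :=
    integrable_of_integrable_trim hF Measure.integrable_toReal_rnDeriv
  have int_g : Integrable g ν :=
    integrable_of_integrable_trim hGF' Measure.integrable_toReal_rnDeriv
  -- integral values
  have hf_int_one : ∫ x, f x ∂ν = 1 := by
    have h1 : ∫ x, f x ∂νF = 1 := by
      rw [hf_def]
      rw [Measure.integral_toReal_rnDeriv hcF.1]
      simp
    rw [← h1, hνF]
    exact integral_trim hF hf_measF.stronglyMeasurable
  have hg_int_one : ∫ x, g x ∂ν = 1 := by
    have h1 : ∫ x, g x ∂νG = 1 := by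
      rw [hg_def]
      rw [Measure.integral_toReal_rnDeriv hcG.1]
      simp
    rw [← h1, hνG]
    exact integral_trim hGF' hg_measG.stronglyMeasurable
  have h_flogf : ∫ x, f x * Real.log (f x) ∂ν = HF := by
    have h1 : ∫ x, f x • Real.log (f x) ∂νF = HF :=
      integral_rnDeriv_smul hcF.1
    simp only [smul_eq_mul] at h1
    rw [← h1, hνF]
    exact integral_trim hF (hf_measF.mul (Real.measurable_log.comp hf_measF)).stronglyMeasurable
  have h_glogg : ∫ x, g x * Real.log (g x) ∂ν = HG := by
    have h1 : ∫ x, g x • Real.log (g x) ∂νG = HG :=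
      integral_rnDeriv_smul hcG.1
    simp only [smul_eq_mul] at h1
    rw [← h1, hνG]
    exact integral_trim hGF' (hg_measG.mul (Real.measurable_log.comp hg_measG)).stronglyMeasurable
  have h_flogg : ∫ x, f x * Real.log (g x) ∂ν = HG := by
    have h1 : ∫ x, f x • Real.log (g x) ∂νF = ∫ x, Real.log (g x) ∂μF :=
      integral_rnDeriv_smul hcF.1
    have h2 : ∫ x, Real.log (g x) ∂μF = ∫ x, Real.log (g x) ∂μG := by
      rw [hμG_trim]
      exact integral_trim hGF (Real.measurable_log.comp hg_measG).stronglyMeasurable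
    have h3 : ∫ x, Real.log (g x) ∂μG = ∫ x, g x • Real.log (g x) ∂νG :=
      (integral_rnDeriv_smul hcG.1).symm
    have h0 : ∫ x, f x * Real.log (g x) ∂ν = ∫ x, f x * Real.log (g x) ∂νF := by
      rw [hνF]
      exact integral_trim hF (hf_measF.mul (Real.measurable_log.comp hg_measF)).stronglyMeasurable
    have h4 : ∫ x, g x • Real.log (g x) ∂νG = HG := by
      simp only [smul_eq_mul]
      have h5 : ∫ x, g x * Real.log (g x) ∂ν = ∫ x, g x * Real.log (g x) ∂νG := by
        rw [hνG]
        exact integral_trim hGF' (hg_measG.mul (Real.measurable_log.comp hg_measG)).stronglyMeasurable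
      rw [← h5, h_glogg]
    simp only [smul_eq_mul] at h1
    rw [h0, h1, h2, h3, h4]
  -- a.e. (g = 0 → f = 0)
  have h_rnG_ne_top : ∀ᵐ x ∂ν, μG.rnDeriv νG x ≠ ⊤ :=
    ae_of_ae_trim hGF' ((Measure.rnDeriv_lt_top μG νG).mono fun x hx => hx.ne)
  set A : Set X := {x | μG.rnDeriv νG x = 0} with hA_def
  have hA_measG : MeasurableSet[mG] A :=
    Measure.measurable_rnDeriv μG νG (measurableSet_singleton 0)
  have hA_measF : MeasurableSet[mF] A := hGF _ hA_measG
  have hμA : μ A = 0 := by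
    have h1 : μG A = 0 := by
      rw [← Measure.setLIntegral_rnDeriv hacG A,
        setLIntegral_congr_fun hA_measG (fun x hx => hx)]
      simp
    rw [← trim_measurableSet_eq hGF' hA_measG]
    exact h1
  have h_f_zero_on_A : ∀ᵐ x ∂ν, x ∈ A → μF.rnDeriv νF x = 0 := by
    have hμFA : μF A = 0 := by
      rw [hμF, trim_measurableSet_eq hF hA_measF]; exact hμA
    have h2 : ∫⁻ x in A, μF.rnDeriv νF x ∂νF = 0 := by
      rw [Measure.setLIntegral_rnDeriv hcF.1 A]; exact hμFA
    have h3 : μF.rnDeriv νF =ᵐ[νF.restrict A] 0 :=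
      (lintegral_eq_zero_iff (Measure.measurable_rnDeriv μF νF)).mp h2
    exact ae_of_ae_trim hF ((ae_restrict_iff' hA_measF).mp h3)
  have hgz : ∀ᵐ x ∂ν, g x = 0 → f x = 0 := by
    filter_upwards [h_f_zero_on_A, h_rnG_ne_top] with x hxA hxtop hgx
    have hx0 : μG.rnDeriv νG x = 0 := by
      rcases (ENNReal.toReal_eq_zero_iff _).mp hgx with h | h
      · exact h
      · exact absurd h hxtop
    have := hxA hx0
    simp [hf_def, this]
  -- the entropy integrand and its integral
  set q : X → ℝ := fun x => f x * Real.log (f x) - f x * Real.log (g x) - f x + g x with hq_def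
  have int_q : Integrable q ν := ((int_flogf.sub int_flogg).sub int_f).add int_g
  have int_A : Integrable (fun x => f x * Real.log (f x) - f x * Real.log (g x)) ν :=
    int_flogf.sub int_flogg
  have int_B : Integrable
      (fun x => f x * Real.log (f x) - f x * Real.log (g x) - f x) ν := int_A.sub int_f
  have hq_int : ∫ x, q x ∂ν = HF - HG := by
    have e1 : ∫ x, q x ∂ν
        = (∫ x, (f x * Real.log (f x) - f x * Real.log (g x) - f x) ∂ν) + ∫ x, g x ∂ν :=
      integral_add int_B int_g
    have e2 : ∫ x, (f x * Real.log (f x) - f x * Real.log (g x) - f x) ∂ν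
        = (∫ x, (f x * Real.log (f x) - f x * Real.log (g x)) ∂ν) - ∫ x, f x ∂ν :=
      integral_sub int_A int_f
    have e3 : ∫ x, (f x * Real.log (f x) - f x * Real.log (g x)) ∂ν
        = (∫ x, f x * Real.log (f x) ∂ν) - ∫ x, f x * Real.log (g x) ∂ν :=
      integral_sub int_flogf int_flogg
    rw [e1, e2, e3, h_flogf, h_flogg, hf_int_one, hg_int_one]
    ring
  have hq_ae : ∀ᵐ x ∂ν, (Real.sqrt (f x) - Real.sqrt (g x)) ^ 2 ≤ q x := by
    filter_upwards [hgz] with x hx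
    exact key_pointwise (hf_nonneg x) (hg_nonneg x) hx
  -- Cauchy-Schwarz setup
  set u : X → ℝ := fun x => |Real.sqrt (f x) - Real.sqrt (g x)| with hu_def
  set v : X → ℝ := fun x => Real.sqrt (f x) + Real.sqrt (g x) with hv_def
  letI : MeasurableSpace X := m0
  have hsf_meas : Measurable[m0] (fun x => Real.sqrt (f x)) := hf_meas.sqrt
  have hsg_meas : Measurable[m0] (fun x => Real.sqrt (g x)) := hg_meas.sqrt
  have hu_meas : Measurable[m0] u := (hsf_meas.sub hsg_meas).abs
  have hv_meas : Measurable[m0] v := hsf_meas.add hsg_meas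
  have hbound_int : Integrable (fun x => 2 * f x + 2 * g x) ν :=
    (int_f.const_mul 2).add (int_g.const_mul 2)
  have hu_sq_le : ∀ x, u x ^ 2 ≤ 2 * f x + 2 * g x := by
    intro x
    have h3 := Real.sq_sqrt (hf_nonneg x)
    have h4 := Real.sq_sqrt (hg_nonneg x)
    simp only [hu_def, sq_abs]
    nlinarith [Real.sqrt_nonneg (f x), Real.sqrt_nonneg (g x),
      sq_nonneg (Real.sqrt (f x) - Real.sqrt (g x)), sq_nonneg (Real.sqrt (f x) + Real.sqrt (g x))]
  have hv_sq_le : ∀ x, v x ^ 2 ≤ 2 * f x + 2 * g x := by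
    intro x
    have h3 := Real.sq_sqrt (hf_nonneg x)
    have h4 := Real.sq_sqrt (hg_nonneg x)
    simp only [hv_def]
    nlinarith [Real.sqrt_nonneg (f x), Real.sqrt_nonneg (g x),
      sq_nonneg (Real.sqrt (f x) - Real.sqrt (g x)), sq_nonneg (Real.sqrt (f x) + Real.sqrt (g x))]
  have int_u2 : Integrable (fun x => u x ^ 2) ν := by
    refine hbound_int.mono' (hu_meas.pow_const 2).aestronglyMeasurable (ae_of_all _ fun x => ?_)
    rw [Real.norm_eq_abs, abs_of_nonneg (sq_nonneg _)]
    exact hu_sq_le x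
  have int_v2 : Integrable (fun x => v x ^ 2) ν := by
    refine hbound_int.mono' (hv_meas.pow_const 2).aestronglyMeasurable (ae_of_all _ fun x => ?_)
    rw [Real.norm_eq_abs, abs_of_nonneg (sq_nonneg _)]
    exact hv_sq_le x
  have h2E : ENNReal.ofReal (2 : ℝ) = 2 := by
    rw [ENNReal.ofReal_ofNat]
  have memu : MemLp u (ENNReal.ofReal 2) ν := by
    rw [h2E]
    exact (memLp_two_iff_integrable_sq hu_meas.aestronglyMeasurable).mpr int_u2
  have memv : MemLp v (ENNReal.ofReal 2) ν := by
    rw [h2E]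
    exact (memLp_two_iff_integrable_sq hv_meas.aestronglyMeasurable).mpr int_v2
  have hpq : Real.HolderConjugate 2 2 := Real.HolderConjugate.two_two
  have hCS := integral_mul_le_Lp_mul_Lq_of_nonneg hpq
    (ae_of_all _ fun x => abs_nonneg _)
    (ae_of_all _ fun x => by simp only [hv_def]; positivity) memu memv
  have hrpow2 : ∀ w : ℝ, w ^ (2 : ℝ) = w ^ 2 := by
    intro w
    rw [show (2 : ℝ) = ((2 : ℕ) : ℝ) by norm_num, Real.rpow_natCast]
  simp only [hrpow2] at hCS
  -- bounds on the two factors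
  set S : ℝ := ∫ x, u x ^ 2 ∂ν with hS_def
  set T : ℝ := ∫ x, v x ^ 2 ∂ν with hT_def
  have hS0 : 0 ≤ S := integral_nonneg fun x => sq_nonneg _
  have hT0 : 0 ≤ T := integral_nonneg fun x => sq_nonneg _
  have hS_lt : S < δ := by
    have h1 : S ≤ ∫ x, q x ∂ν := by
      refine integral_mono_ae int_u2 int_q ?_
      filter_upwards [hq_ae] with x hx
      simpa only [hu_def, sq_abs] using hx
    rw [hq_int] at h1
    linarith
  have hT_le : T ≤ 4 := by
    have h1 : T ≤ ∫ x, 2 * f x + 2 * g x ∂ν := integral_mono int_v2 hbound_int hv_sq_le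
    have e4 : ∫ x, 2 * f x + 2 * g x ∂ν = (∫ x, 2 * f x ∂ν) + ∫ x, 2 * g x ∂ν :=
      integral_add (int_f.const_mul 2) (int_g.const_mul 2)
    rw [e4, integral_const_mul, integral_const_mul, hf_int_one, hg_int_one] at h1
    linarith
  -- final computation
  have hShalf_lt : S ^ ((1 : ℝ) / 2) < ε / 2 := by
    have h1 : S ^ ((1 : ℝ) / 2) < δ ^ ((1 : ℝ) / 2) :=
      Real.rpow_lt_rpow hS0 hS_lt (by norm_num)
    have h2 : δ ^ ((1 : ℝ) / 2) = ε / 2 := by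
      rw [← Real.sqrt_eq_rpow, show δ = (ε / 2) ^ 2 by rw [hδ_def]; ring,
        Real.sqrt_sq (by positivity)]
    rwa [h2] at h1
  have hThalf_le : T ^ ((1 : ℝ) / 2) ≤ 2 := by
    have h1 : T ^ ((1 : ℝ) / 2) ≤ (4 : ℝ) ^ ((1 : ℝ) / 2) :=
      Real.rpow_le_rpow hT0 hT_le (by norm_num)
    have h2 : (4 : ℝ) ^ ((1 : ℝ) / 2) = 2 := by
      rw [← Real.sqrt_eq_rpow, show (4 : ℝ) = 2 ^ 2 by norm_num, Real.sqrt_sq (by norm_num)]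
    rwa [h2] at h1
  have h_uv : ∀ x, |f x - g x| = u x * v x := by
    intro x
    have h3 := Real.sq_sqrt (hf_nonneg x)
    have h4 := Real.sq_sqrt (hg_nonneg x)
    simp only [hu_def, hv_def]
    rw [← abs_of_nonneg (show (0:ℝ) ≤ Real.sqrt (f x) + Real.sqrt (g x) by positivity),
      ← abs_mul]
    congr 1
    linear_combination h4 - h3
  have hfinal : ∫ x, |f x - g x| ∂ν < ε := by
    calc ∫ x, |f x - g x| ∂ν = ∫ x, u x * v x ∂ν := by
          exact integral_congr_ae (ae_of_all _ fun x => h_uv x)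
      _ ≤ S ^ ((1 : ℝ) / 2) * T ^ ((1 : ℝ) / 2) := hCS
      _ ≤ S ^ ((1 : ℝ) / 2) * 2 :=
          mul_le_mul_of_nonneg_left hThalf_le (Real.rpow_nonneg hS0 _)
      _ < (ε / 2) * 2 := by
          have := mul_lt_mul_of_pos_right hShalf_lt (show (0:ℝ) < 2 by norm_num)
          exact this
      _ = ε := by ring
  exact hfinal
end
end
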